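/- Parallel repetition of robust state-preparation circuits: let π^{(1)},...,π^{(k)} be circuits acting on disjoint qubit sets, where π^{(j)} acts on N^{(j)} qubits, outputs r^{(j)} qubits, and is (p_0^{(j)}, f^{(j)})-robust. Let r = max_j r^{(j)}, p_0 = min_j p_0^{(j)}, and let E be local stochastic noise of strength p ≤ p_0 on all N = Σ_j N^{(j)} qubits. Then the effective error E_eff on the Σ_j r^{(j)} output qubits (which equals the tensor product of the individual effective errors E_eff^{(j)}(E^{(j)})) is local stochastic of strength (max_j f^{(j)}(p))^{1/r}. In particular, if f^{(j)}(p) ≤ C p^c for all j and p ≤ p_0, then E_eff is local stochastic of strength C^{1/r} p^{c/r}. -/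

import Mathlib

open MeasureTheory

/-- A random subset `S` of `α` is a local stochastic set of parameter `p`. -/
def LocalStochastic {Ω α : Type*} [MeasurableSpace Ω]
    (μ : Measure Ω) (S : Ω → Finset α) (p : ℝ) : Prop :=
  ∀ F : Finset α, μ {ω | F ⊆ S ω} ≤ ENNReal.ofReal (p ^ F.card)

lemma stmt11aux {Ω : Type*} [MeasurableSpace Ω] (μ : Measure Ω) [IsProbabilityMeasure μ]
    (s : Set Ω) (B : ℝ) (hB : 0 ≤ B) (R t m : ℕ) (hR : 1 ≤ R) (hm : m ≤ t * R)
    (h : μ s ≤ ENNReal.ofReal (B ^ t)) :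
    μ s ≤ ENNReal.ofReal ((B ^ ((1:ℝ)/(R:ℝ))) ^ m) := by
  have hRpos : (0:ℝ) < R := by exact_mod_cast hR
  rcases lt_or_ge 1 B with hB1 | hB1
  · refine le_trans prob_le_one ?_
    rw [ENNReal.one_le_ofReal]
    refine one_le_pow₀ ?_
    calc (1:ℝ) = 1 ^ ((1:ℝ)/(R:ℝ)) := (Real.one_rpow _).symm
      _ ≤ B ^ ((1:ℝ)/(R:ℝ)) := Real.rpow_le_rpow (by norm_num) hB1.le (by positivity)
  · rcases eq_or_lt_of_le hB with h0 | h0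
    · rcases Nat.eq_zero_or_pos t with ht | ht
      · subst ht
        have hm0 : m = 0 := by omega
        subst hm0; simpa using h
      · have hz : μ s = 0 := le_antisymm (by simpa [← h0, zero_pow ht.ne'] using h) zero_le
        simp [hz]
    · refine h.trans (ENNReal.ofReal_le_ofReal ?_)
      have e1 : (B ^ ((1:ℝ)/(R:ℝ))) ^ m = B ^ ((m:ℝ)/(R:ℝ)) := by
        rw [← Real.rpow_natCast (B ^ ((1:ℝ)/(R:ℝ))) m, ← Real.rpow_mul hB]
        congr 1; field_simp
      rw [e1, ← Real.rpow_natCast B t]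
      apply Real.rpow_le_rpow_of_exponent_ge h0 hB1
      rw [div_le_iff₀ hRpos]
      exact_mod_cast hm


/-- parallel repetition of robust state-preparation circuits.
Circuit `j` acts on the region `A j` of the `n` input qubits (regions pairwise
disjoint), outputs `r j` qubits and has effective-error map `Eeff j`, determined
by the error restricted to `A j`.  Robustness of circuit `j` is witnessed by a
family `M j` of subsets of `A j` with `Σ_{D ∈ M j} q^{|D|} ≤ f j q` for
`q ≤ p0 j`.  Under joint local stochastic noise of strength `p ≤ min_j p0 j`,
the total effective error on the output qubits is local stochastic of strength
`(max_j f j p)^{1/r}` with `r = max_j r j`; in particular of strength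
`C^{1/r}·p^{c/r}` whenever `f j q ≤ C·q^c` for all `j` and `q ≤ p0 j`. -/
theorem stmt11 {Ω : Type*} [MeasurableSpace Ω] (μ : Measure Ω) [IsProbabilityMeasure μ]
    (n k : ℕ) (hk : 0 < k)
    (A : Fin k → Finset (Fin n))
    (hdisj : ∀ i j : Fin k, i ≠ j → Disjoint (A i) (A j))
    (r : Fin k → ℕ) (hr : ∀ j, 0 < r j)
    (Eeff : (j : Fin k) → Finset (Fin n) → Finset (Fin (r j)))
    (hdet : ∀ j E, Eeff j E = Eeff j (E ∩ A j))
    (p0 : Fin k → ℝ) (f : Fin k → ℝ → ℝ)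
    (M : Fin k → Finset (Finset (Fin n)))
    (hMsub : ∀ j, ∀ D ∈ M j, D ⊆ A j)
    (hrobust : ∀ j (E : Finset (Fin n)), (Eeff j E).Nonempty → ∃ D ∈ M j, D ⊆ E)
    (hf : ∀ j (q : ℝ), 0 ≤ q → q ≤ p0 j → ∑ D ∈ M j, q ^ D.card ≤ f j q)
    (S : Ω → Finset (Fin n)) (p : ℝ) (hp0 : 0 ≤ p)
    (hp : ∀ j, p ≤ p0 j)
    (hS : LocalStochastic μ S p)
    (C c : ℝ) :
    LocalStochastic μ
      (fun ω => Finset.univ.filter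
        (fun o : (j : Fin k) × Fin (r j) => o.2 ∈ Eeff o.1 (S ω)))
      ((Finset.univ.sup' ⟨⟨0, hk⟩, Finset.mem_univ _⟩ (fun j => f j p)) ^
        ((1 : ℝ) / ((Finset.univ.sup r : ℕ) : ℝ))) ∧
    ((∀ j (q : ℝ), 0 ≤ q → q ≤ p0 j → f j q ≤ C * q ^ c) →
      LocalStochastic μ
        (fun ω => Finset.univ.filter
          (fun o : (j : Fin k) × Fin (r j) => o.2 ∈ Eeff o.1 (S ω)))
        (C ^ ((1 : ℝ) / ((Finset.univ.sup r : ℕ) : ℝ)) *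
          p ^ (c / ((Finset.univ.sup r : ℕ) : ℝ)))) := by
  classical
  set R : ℕ := Finset.univ.sup r with hRdef
  have hR : 1 ≤ R := le_trans (hr ⟨0, hk⟩) (Finset.le_sup (Finset.mem_univ _))
  set G : ℝ := Finset.univ.sup' ⟨⟨0, hk⟩, Finset.mem_univ _⟩ (fun j => f j p) with hGdef
  have hsum_nonneg : ∀ j : Fin k, 0 ≤ ∑ D ∈ M j, p ^ D.card :=
    fun j => Finset.sum_nonneg (fun D _ => pow_nonneg hp0 _)
  have hfp : ∀ j, 0 ≤ f j p := fun j => (hsum_nonneg j).trans (hf j p hp0 (hp j))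
  have hGj : ∀ j, f j p ≤ G := fun j => Finset.le_sup' (fun j => f j p) (Finset.mem_univ j)
  have hG0 : 0 ≤ G := (hfp ⟨0, hk⟩).trans (hGj _)
  -- the key union bound
  have key : ∀ F : Finset ((j : Fin k) × Fin (r j)),
      μ {ω | F ⊆ Finset.univ.filter
          (fun o : (j : Fin k) × Fin (r j) => o.2 ∈ Eeff o.1 (S ω))}
        ≤ ENNReal.ofReal (G ^ (F.image Sigma.fst).card) := by
    intro F
    set J : Finset (Fin k) := F.image Sigma.fst with hJdef
    set M' : (j : Fin k) → Finset (Finset (Fin n)) :=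
      fun j => if j ∈ J then M j else {∅} with hM'def
    have hcover : {ω | F ⊆ Finset.univ.filter
          (fun o : (j : Fin k) × Fin (r j) => o.2 ∈ Eeff o.1 (S ω))}
        ⊆ ⋃ g ∈ Fintype.piFinset M', {ω | J.biUnion g ⊆ S ω} := by
      intro ω hω
      simp only [Set.mem_setOf_eq] at hω
      have hch : ∀ j : Fin k, j ∈ J → ∃ D ∈ M j, D ⊆ S ω := by
        intro j hj
        obtain ⟨o, ho, hoj⟩ := Finset.mem_image.1 hj
        subst hoj
        have ho2 : o.2 ∈ Eeff o.1 (S ω) := by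
          have := hω ho
          simpa [Finset.mem_filter] using this
        have hne : (Eeff o.1 (S ω ∩ A o.1)).Nonempty := by
          rw [← hdet]; exact ⟨o.2, ho2⟩
        obtain ⟨D, hD, hDs⟩ := hrobust o.1 (S ω ∩ A o.1) hne
        exact ⟨D, hD, hDs.trans Finset.inter_subset_left⟩
      choose g hg1 hg2 using hch
      set g' : Fin k → Finset (Fin n) := fun j => if h : j ∈ J then g j h else ∅ with hg'def
      refine Set.mem_iUnion₂.2 ⟨g', ?_, ?_⟩
      · rw [Fintype.mem_piFinset]
        intro j
        by_cases h : j ∈ J <;> simp [g', M', h, hg1]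
      · simp only [Set.mem_setOf_eq]
        intro x hx
        obtain ⟨j, hj, hxj⟩ := Finset.mem_biUnion.1 hx
        have hxg : x ∈ g j hj := by simpa [g', hj] using hxj
        exact hg2 j hj hxg
    have hcard : ∀ g ∈ Fintype.piFinset M', (J.biUnion g).card = ∑ j ∈ J, (g j).card := by
      intro g hg
      rw [Fintype.mem_piFinset] at hg
      refine Finset.card_biUnion ?_
      intro i hi j hj hij
      have hgi : g i ⊆ A i := by
        have := hg i; rw [hM'def] at this; simp only [Finset.mem_coe.mp hi, if_pos] at this
        exact hMsub i _ this
      have hgj : g j ⊆ A j := by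
        have := hg j; rw [hM'def] at this; simp only [Finset.mem_coe.mp hj, if_pos] at this
        exact hMsub j _ this
      exact Finset.disjoint_of_subset_left hgi (Finset.disjoint_of_subset_right hgj (hdisj i j hij))
    calc μ {ω | F ⊆ Finset.univ.filter
          (fun o : (j : Fin k) × Fin (r j) => o.2 ∈ Eeff o.1 (S ω))}
        ≤ μ (⋃ g ∈ Fintype.piFinset M', {ω | J.biUnion g ⊆ S ω}) := measure_mono hcover
      _ ≤ ∑ g ∈ Fintype.piFinset M', μ {ω | J.biUnion g ⊆ S ω} :=
          measure_biUnion_finset_le _ _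
      _ ≤ ∑ g ∈ Fintype.piFinset M', ENNReal.ofReal (p ^ (J.biUnion g).card) :=
          Finset.sum_le_sum (fun g _ => hS _)
      _ = ENNReal.ofReal (∑ g ∈ Fintype.piFinset M', p ^ (J.biUnion g).card) :=
          (ENNReal.ofReal_sum_of_nonneg (fun g _ => pow_nonneg hp0 _)).symm
      _ ≤ ENNReal.ofReal (G ^ J.card) := by
          apply ENNReal.ofReal_le_ofReal
          have step1 : ∀ g ∈ Fintype.piFinset M', p ^ (J.biUnion g).card
              = ∏ j, (if j ∈ J then p ^ (g j).card else 1) := by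
            intro g hg
            rw [hcard g hg, ← Finset.prod_pow_eq_pow_sum, Finset.prod_ite_mem,
              Finset.univ_inter]
          have step2 : ∀ j : Fin k,
              (∑ D ∈ M' j, if j ∈ J then p ^ D.card else 1) ≤ (if j ∈ J then G else 1) := by
            intro j
            by_cases h : j ∈ J
            · simp only [h, if_pos, hM'def]
              exact le_trans (hf j p hp0 (hp j)) (hGj j)
            · simp [h, hM'def]
          calc ∑ g ∈ Fintype.piFinset M', p ^ (J.biUnion g).card
              = ∑ g ∈ Fintype.piFinset M', ∏ j, (if j ∈ J then p ^ (g j).card else 1) :=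
                Finset.sum_congr rfl step1
            _ = ∏ j, ∑ D ∈ M' j, (if j ∈ J then p ^ D.card else 1) :=
                (Finset.prod_univ_sum M' (fun j D => if j ∈ J then p ^ D.card else 1)).symm
            _ ≤ ∏ j, (if j ∈ J then G else 1) := by
                refine Finset.prod_le_prod ?_ (fun j _ => step2 j)
                intro j _
                by_cases h : j ∈ J <;> simp [h, hsum_nonneg, hM'def]
            _ = G ^ J.card := by
                rw [Finset.prod_ite_mem, Finset.univ_inter, Finset.prod_const]
  -- cardinality comparison
  have hFcard : ∀ F : Finset ((j : Fin k) × Fin (r j)),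
      F.card ≤ (F.image Sigma.fst).card * R := by
    intro F
    set J : Finset (Fin k) := F.image Sigma.fst with hJdef
    have h1 : F ⊆ J.sigma (fun j => Finset.univ) := by
      intro o ho
      exact Finset.mem_sigma.2 ⟨Finset.mem_image_of_mem _ ho, Finset.mem_univ _⟩
    calc F.card ≤ (J.sigma fun j => (Finset.univ : Finset (Fin (r j)))).card :=
          Finset.card_le_card h1
      _ = ∑ j ∈ J, (Finset.univ : Finset (Fin (r j))).card := Finset.card_sigma _ _
      _ = ∑ j ∈ J, r j := by simp
      _ ≤ ∑ j ∈ J, R := Finset.sum_le_sum (fun j _ => Finset.le_sup (Finset.mem_univ j))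
      _ = J.card * R := by rw [Finset.sum_const, smul_eq_mul]
  constructor
  · intro F
    exact stmt11aux μ _ G hG0 R _ F.card hR (hFcard F) (key F)
  · intro hC
    intro F
    have hGB : G ≤ C * p ^ c := Finset.sup'_le _ _ (fun j _ => hC j p hp0 (hp j))
    have hB0 : 0 ≤ C * p ^ c := hG0.trans hGB
    have hpc : 0 ≤ p ^ c := Real.rpow_nonneg hp0 c
    rcases le_or_gt 0 C with hC0 | hC0
    · have heq : C ^ ((1:ℝ)/(R:ℝ)) * p ^ (c/(R:ℝ)) = (C * p ^ c) ^ ((1:ℝ)/(R:ℝ)) := by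
        rw [Real.mul_rpow hC0 hpc]
        congr 1
        rw [← Real.rpow_mul hp0]
        congr 1; ring
      rw [heq]
      refine stmt11aux μ _ (C * p ^ c) hB0 R _ F.card hR (hFcard F) ?_
      exact (key F).trans (ENNReal.ofReal_le_ofReal (pow_le_pow_left₀ hG0 hGB _))
    · -- C < 0 forces p ^ c = 0, hence everything degenerates
      have hpc0 : p ^ c = 0 := by
        by_contra h
        have hpcpos : 0 < p ^ c := lt_of_le_of_ne hpc (Ne.symm h)
        nlinarith
      have hG00 : G = 0 := le_antisymm (by rw [hpc0, mul_zero] at hGB; exact hGB) hG0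
      have hc0 : c ≠ 0 := by
        intro h; rw [h, Real.rpow_zero] at hpc0; norm_num at hpc0
      have hp00 : p = 0 := by
        by_contra h
        have : 0 < p := lt_of_le_of_ne hp0 (Ne.symm h)
        exact absurd hpc0 (ne_of_gt (Real.rpow_pos_of_pos this c))
      have hRpos : (0:ℝ) < (R:ℝ) := by exact_mod_cast hR
      have hcR : c / (R:ℝ) ≠ 0 := div_ne_zero hc0 (ne_of_gt hRpos)
      have hparam : C ^ ((1:ℝ)/(R:ℝ)) * p ^ (c/(R:ℝ)) = (0:ℝ) ^ ((1:ℝ)/(R:ℝ)) := by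
        rw [hp00, Real.zero_rpow hcR, mul_zero, Real.zero_rpow (by positivity : (1:ℝ)/(R:ℝ) ≠ 0)]
      rw [hparam]
      refine stmt11aux μ _ 0 le_rfl R _ F.card hR (hFcard F) ?_
      have := key F
      rwa [hG00] at this
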